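/- arXiv:1902.04789 — 4 statements merged into one kernel-verified Lean document; each statement's English description precedes it below -/
import Mathlib

section
/- Let a finite set C of replicas be partitioned into pairwise disjoint blocks C_d indexed by a nonempty finite set D of data centres, and let W, R ⊆ C. Let q, q' be positive reals with q + q' ≥ 1. If for every d ∈ D one has q·|C_d| < |W ∩ C_d| and q'·|C_d| < |R ∩ C_d|, then W ∩ R is nonempty. In other words, a write quorum complying with Each_Quorum(q) and a read quorum complying with Each_Quorum(q') with q + q' ≥ 1 always share at least one replica. -/
/-- An `Each_Quorum(q)` write set and an `Each_Quorum(q')` read set with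
`q + q' ≥ 1` always share at least one replica. -/
theorem each_quorum_intersect {α ι : Type*} [DecidableEq α]
    (D : Finset ι) (hD : D.Nonempty) (Cd : ι → Finset α)
    (hdisj : ∀ d ∈ D, ∀ d' ∈ D, d ≠ d' → Disjoint (Cd d) (Cd d'))
    (C : Finset α) (hC : C = D.biUnion Cd)
    (W R : Finset α) (hW : W ⊆ C) (hR : R ⊆ C)
    (q q' : ℝ) (hq : 0 < q) (hq' : 0 < q') (hqq' : q + q' ≥ 1)
    (hWq : ∀ d ∈ D, q * ((Cd d).card : ℝ) < ((W ∩ Cd d).card : ℝ))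
    (hRq : ∀ d ∈ D, q' * ((Cd d).card : ℝ) < ((R ∩ Cd d).card : ℝ)) :
    (W ∩ R).Nonempty := by
  obtain ⟨d, hd⟩ := hD
  have h1 := hWq d hd
  have h2 := hRq d hd
  have hsum : ((Cd d).card : ℝ) < ((W ∩ Cd d).card : ℝ) + ((R ∩ Cd d).card : ℝ) := by
    have : (1 : ℝ) * ((Cd d).card : ℝ) ≤ (q + q') * ((Cd d).card : ℝ) := by
      apply mul_le_mul_of_nonneg_right hqq' (by positivity)
    nlinarith
  have hsum' : (Cd d).card < (W ∩ Cd d).card + (R ∩ Cd d).card := by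
    exact_mod_cast hsum
  have hunion : ((W ∩ Cd d) ∪ (R ∩ Cd d)).card ≤ (Cd d).card :=
    Finset.card_le_card (Finset.union_subset (Finset.inter_subset_right)
      (Finset.inter_subset_right))
  have hkey : 0 < ((W ∩ Cd d) ∩ (R ∩ Cd d)).card := by
    have := Finset.card_union_add_card_inter (W ∩ Cd d) (R ∩ Cd d)
    omega
  obtain ⟨x, hx⟩ := Finset.card_pos.mp hkey
  simp only [Finset.mem_inter] at hx
  exact ⟨x, Finset.mem_inter.mpr ⟨hx.1.1, hx.2.1⟩⟩
end

section
/- Let a finite set C of replicas be partitioned into pairwise disjoint blocks C_d indexed by a nonempty finite set D, let W, R ⊆ C, and let q, q' be positive reals with q + q' ≥ 1. If q·|C_d| < |W ∩ C_d| for every d ∈ D (W complies with Each_Quorum(q)) and q'·|C| < |R| (R complies with Quorum(q')), then W ∩ R is nonempty. Thus the mixed combination of a write-policy Each_Quorum(q) with a read-policy Quorum(q'), q + q' ≥ 1, guarantees a common replica. -/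
/-- A write set complying with `Each_Quorum(q)` and a read set complying with
`Quorum(q')`, where `q + q' ≥ 1`, always share at least one replica. -/
theorem each_quorum_quorum_intersect {α ι : Type*} [DecidableEq α]
    (D : Finset ι) (hD : D.Nonempty) (Cd : ι → Finset α)
    (hdisj : ∀ d ∈ D, ∀ d' ∈ D, d ≠ d' → Disjoint (Cd d) (Cd d'))
    (C : Finset α) (hC : C = D.biUnion Cd)
    (W R : Finset α) (hW : W ⊆ C) (hR : R ⊆ C)
    (q q' : ℝ) (hq : 0 < q) (hq' : 0 < q') (hqq' : q + q' ≥ 1)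
    (hWq : ∀ d ∈ D, q * ((Cd d).card : ℝ) < ((W ∩ Cd d).card : ℝ))
    (hRq : q' * (C.card : ℝ) < (R.card : ℝ)) :
    (W ∩ R).Nonempty := by
  by_contra h
  rw [Finset.not_nonempty_iff_eq_empty, ← Finset.disjoint_iff_inter_eq_empty] at h
  -- |C| = Σ |C_d|
  have hCcard : (C.card : ℝ) = ∑ d ∈ D, ((Cd d).card : ℝ) := by
    rw [hC, Finset.card_biUnion hdisj]
    push_cast; ring
  -- Σ |W ∩ C_d| ≤ |W|
  have hWsum : ∑ d ∈ D, ((W ∩ Cd d).card : ℝ) ≤ (W.card : ℝ) := by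
    have : ∑ d ∈ D, (W ∩ Cd d).card ≤ W.card := by
      rw [← Finset.card_biUnion (fun d hd d' hd' hne =>
        (hdisj d hd d' hd' hne).mono (Finset.inter_subset_right) (Finset.inter_subset_right))]
      exact Finset.card_le_card (Finset.biUnion_subset.mpr fun d _ => Finset.inter_subset_left)
    exact_mod_cast this
  -- q|C| < |W|
  have hWbig : q * (C.card : ℝ) < (W.card : ℝ) := by
    calc q * (C.card : ℝ) = ∑ d ∈ D, q * ((Cd d).card : ℝ) := by
          rw [hCcard, Finset.mul_sum]
      _ < ∑ d ∈ D, ((W ∩ Cd d).card : ℝ) := Finset.sum_lt_sum_of_nonempty hD hWq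
      _ ≤ (W.card : ℝ) := hWsum
  -- |W| + |R| ≤ |C|
  have hle : (W.card : ℝ) + (R.card : ℝ) ≤ (C.card : ℝ) := by
    have := Finset.card_le_card (Finset.union_subset hW hR)
    rw [Finset.card_union_of_disjoint h] at this
    exact_mod_cast this
  have hCpos : (0 : ℝ) ≤ (C.card : ℝ) := by positivity
  nlinarith [hWbig, hRq, hle, hqq', hCpos]
end

section
/- Let C be a finite set of replicas and f a function assigning to each replica c ∈ C a pair f(c) = (value, timestamp), with timestamps from a linear order. Let q, q' be positive reals with q + q' ≥ 1, and let W, R ⊆ C with q·|C| < |W| and q'·|C| < |R|. Suppose every replica w ∈ W satisfies f(w) = (v, t), and for every replica c ∈ C the timestamp of f(c) is ≤ t and, if it equals t, then the value of f(c) is v. Then every replica r ∈ R whose timestamp is maximal within R holds the value v. In other words, after a write of value v with timestamp t has succeeded on a Quorum(q) write set, any read complying with Quorum(q') with q + q' ≥ 1 that returns the value with the latest timestamp among the accessed replicas returns v. -/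
/-- After a write of `(v, t)` has succeeded on a `Quorum(q)` write set `W`,
any read from a `Quorum(q')` read set `R` with `q + q' ≥ 1` that returns the
value with the latest timestamp among the accessed replicas returns `v`. -/
theorem quorum_read_returns_written_value {α V T : Type*} [DecidableEq α]
    [LinearOrder T]
    (C : Finset α) (f : α → V × T) (v : V) (t : T)
    (q q' : ℝ) (hq : 0 < q) (hq' : 0 < q') (hqq' : q + q' ≥ 1)
    (W R : Finset α) (hW : W ⊆ C) (hR : R ⊆ C)
    (hWq : q * (C.card : ℝ) < (W.card : ℝ))
    (hRq : q' * (C.card : ℝ) < (R.card : ℝ))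
    (hwrite : ∀ w ∈ W, f w = (v, t))
    (hmax : ∀ c ∈ C, (f c).2 ≤ t)
    (hval : ∀ c ∈ C, (f c).2 = t → (f c).1 = v) :
    ∀ r ∈ R, (∀ r' ∈ R, (f r').2 ≤ (f r).2) → (f r).1 = v := by
  intro r hr hrmax
  -- W ∩ R is nonempty
  have hC : ((C.card : ℝ)) ≤ (W.card : ℝ) + (R.card : ℝ) := by
    have : (1 : ℝ) * C.card ≤ (q + q') * C.card := by
      apply mul_le_mul_of_nonneg_right hqq' (by positivity)
    nlinarith
  have hcard : C.card < W.card + R.card := by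
    have := add_lt_add hWq hRq
    have h2 : (C.card : ℝ) < (W.card : ℝ) + (R.card : ℝ) := by nlinarith
    exact_mod_cast h2
  have hunion : (W ∪ R).card ≤ C.card := Finset.card_le_card (Finset.union_subset hW hR)
  have hinter : 0 < (W ∩ R).card := by
    have := Finset.card_union_add_card_inter W R
    omega
  obtain ⟨w, hw⟩ := Finset.card_pos.mp hinter
  have hwW := Finset.mem_of_mem_inter_left hw
  have hwR := Finset.mem_of_mem_inter_right hw
  have hfw := hwrite w hwW
  have h1 : t ≤ (f r).2 := by
    have := hrmax w hwR
    rw [hfw] at this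
    exact this
  have h2 : (f r).2 = t := le_antisymm (hmax r (hR hr)) h1
  exact hval r (hR hr) h2
end

section
/- Let timestamps come from a linear order, and define the conditional-update step on pairs (value, timestamp) by step(cur, new) = new if the timestamp of cur is strictly smaller than the timestamp of new, and step(cur, new) = cur otherwise. Let p₀ be an initial pair and l a finite list of pairs such that the timestamps of the elements of p₀ :: l are pairwise distinct. Then for every permutation l' of l, folding step over l' starting from p₀ yields the same result as folding step over l starting from p₀; namely, both equal the unique element of p₀ :: l with maximal timestamp. In other words, under distinct timestamps the final replica value is independent of the order in which the writes arrive. -/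
/-- The conditional update: a write `new` replaces the current pair `cur`
only if its timestamp is strictly larger. -/
def condStep {V T : Type*} [LinearOrder T] (cur new : V × T) : V × T :=
  if cur.2 < new.2 then new else cur

lemma foldl_condStep_mem_max {V T : Type*} [LinearOrder T]
    (l : List (V × T)) (p₀ : V × T) :
    (l.foldl condStep p₀) ∈ p₀ :: l ∧
    ∀ p ∈ p₀ :: l, p.2 ≤ (l.foldl condStep p₀).2 := by
  induction l generalizing p₀ with
  | nil => simp
  | cons a l ih =>
    obtain ⟨hmem, hmax⟩ := ih (condStep p₀ a)
    rw [List.foldl_cons]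
    constructor
    · rcases List.mem_cons.mp hmem with h | h
      · rw [h]
        unfold condStep; split
        · exact List.mem_cons_of_mem _ (List.mem_cons_self)
        · exact List.mem_cons_self
      · exact List.mem_cons_of_mem _ (List.mem_cons_of_mem _ h)
    · intro p hp
      rcases List.mem_cons.mp hp with rfl | hp
      · refine le_trans ?_ (hmax _ (List.mem_cons_self))
        unfold condStep; split
        · exact le_of_lt (by assumption)
        · exact le_rfl
      · rcases List.mem_cons.mp hp with rfl | hp
        · refine le_trans ?_ (hmax _ (List.mem_cons_self))
          unfold condStep; split
          · exact le_rfl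
          · exact le_of_not_gt (by assumption)
        · exact hmax _ (List.mem_cons_of_mem _ hp)

/-- Under pairwise distinct timestamps, the final replica value is independent
of the order in which the writes arrive: folding over any permutation of the
write list gives the same result, namely the unique element of `p₀ :: l` with
maximal timestamp. -/
theorem foldl_condStep_perm_invariant {V T : Type*} [LinearOrder T]
    (p₀ : V × T) (l : List (V × T))
    (hdist : (p₀ :: l).Pairwise (fun a b => a.2 ≠ b.2)) :
    (∀ l' : List (V × T), l'.Perm l →
      l'.foldl condStep p₀ = l.foldl condStep p₀) ∧
    (l.foldl condStep p₀) ∈ p₀ :: l ∧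
    ∀ p ∈ p₀ :: l, p.2 ≤ (l.foldl condStep p₀).2 := by
  obtain ⟨hmem, hmax⟩ := foldl_condStep_mem_max l p₀
  refine ⟨?_, hmem, hmax⟩
  intro l' hperm
  obtain ⟨hmem', hmax'⟩ := foldl_condStep_mem_max l' p₀
  have hmem'' : l'.foldl condStep p₀ ∈ p₀ :: l := by
    exact (hperm.cons p₀).mem_iff.mp hmem'
  have hmax'' : ∀ p ∈ p₀ :: l, p.2 ≤ (l'.foldl condStep p₀).2 := by
    intro p hp
    exact hmax' p ((hperm.cons p₀).mem_iff.mpr hp)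
  have heq : (l'.foldl condStep p₀).2 = (l.foldl condStep p₀).2 :=
    le_antisymm (hmax _ hmem'') (hmax'' _ hmem)
  have key : ∀ a ∈ p₀ :: l, ∀ b ∈ p₀ :: l, a.2 = b.2 → a = b := by
    intro a ha b hb hab
    by_contra hne
    haveI : Std.Symm (fun a b : V × T => a.2 ≠ b.2) := ⟨fun x y h => Ne.symm h⟩
    exact hdist.forall ha hb hne hab
  exact key _ hmem'' _ hmem heq
end
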